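/- Conversely, if there exist k s-t paths in a finite DAG G (with every vertex on some s-t path) that collectively visit every vertex, and k ≤ |V| - 2, then the split network admits a feasible integer flow of value k. -/

import Mathlib

/-- A walk in a directed graph given by edge relation `E`. -/
def IsWalk {V : Type*} (E : V → V → Prop) (l : List V) : Prop :=
  l ≠ [] ∧ l.Chain' E

/-- An s-t walk. -/
def IsSTWalk {V : Type*} (E : V → V → Prop) (s t : V) (l : List V) : Prop :=
  IsWalk E l ∧ l.head? = some s ∧ l.getLast? = some t

/-- Edges of the vertex-split network: each vertex `v` is split into the entry
vertex `Sum.inl v` (i.e. `v⁺`) and the exit vertex `Sum.inr v` (i.e. `v⁺⁺`),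
joined by the split edge `(v⁺, v⁺⁺)`; each original edge `(u,v)` becomes
`(u⁺⁺, v⁺)`. -/
def SplitEdge {V : Type*} (E : V → V → Prop) : V ⊕ V → V ⊕ V → Prop :=
  fun a b =>
    match a, b with
    | Sum.inl v, Sum.inr w => v = w
    | Sum.inr u, Sum.inl v => E u v
    | _, _ => False

/-- Lower bounds of the split network: 1 on the split edge `(v⁺, v⁺⁺)` of every
internal vertex `v ∉ {s, t}`, 0 everywhere else. -/
def SplitLB {V : Type*} [DecidableEq V] (s t : V) : V ⊕ V → V ⊕ V → ℕ :=
  fun a b =>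
    match a, b with
    | Sum.inl v, Sum.inr w => if v = w ∧ v ≠ s ∧ v ≠ t then 1 else 0
    | _, _ => 0

/-- A feasible (integer) flow on the split network: supported on the edges,
meeting the lower bounds, with every edge capacity `|V| - 2`, and conserving
flow at every vertex other than the source `s⁺` and the sink `t⁺⁺`. -/
def FeasibleSplitFlow {V : Type*} [Fintype V] [DecidableEq V]
    (E : V → V → Prop) (s t : V) (f : V ⊕ V → V ⊕ V → ℕ) : Prop :=
  (∀ a b, ¬ SplitEdge E a b → f a b = 0) ∧
  (∀ a b, SplitLB s t a b ≤ f a b) ∧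
  (∀ a b, SplitEdge E a b → f a b ≤ Fintype.card V - 2) ∧
  (∀ w, w ≠ Sum.inl s → w ≠ Sum.inr t → (∑ a, f a w) = ∑ b, f w b)

/-- The value of a flow on the split network: total flow out of the source `s⁺`. -/
def SplitFlowValue {V : Type*} [Fintype V] (s : V) (f : V ⊕ V → V ⊕ V → ℕ) : ℕ :=
  ∑ b, f (Sum.inl s) b

section Aux

variable {V : Type*} {α : Type*}

/-- The split walk: each vertex `v` becomes `[v⁺, v⁺⁺]`. -/
def splitL (l : List V) : List (V ⊕ V) :=
  l.flatMap (fun v => [Sum.inl v, Sum.inr v])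

/-- The list of consecutive pairs of a list. -/
def pairsL : List α → List (α × α)
  | [] => []
  | [_] => []
  | a :: b :: rest => (a, b) :: pairsL (b :: rest)

/-- `List.count` with the `BEq` instance coming from `DecidableEq`. -/
def cntD {α : Type*} [DecidableEq α] (x : α) (l : List α) : ℕ := List.count x l

lemma cntD_eq_zero {α : Type*} [DecidableEq α] {x : α} {l : List α} :
    cntD x l = 0 ↔ x ∉ l := List.count_eq_zero

lemma cntD_pos {α : Type*} [DecidableEq α] {x : α} {l : List α} :
    0 < cntD x l ↔ x ∈ l := List.count_pos_iff

lemma cntD_le_one {α : Type*} [DecidableEq α] {l : List α} (h : l.Nodup) (x : α) :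
    cntD x l ≤ 1 := List.nodup_iff_count_le_one.mp h x

lemma cntD_eq_one {α : Type*} [DecidableEq α] {l : List α} (h : l.Nodup) {x : α}
    (hx : x ∈ l) : cntD x l = 1 := List.count_eq_one_of_mem h hx

lemma pairsL_cons_cons (a b : α) (rest : List α) :
    pairsL (a :: b :: rest) = (a, b) :: pairsL (b :: rest) := rfl

lemma pairsL_subset_cons (x : α) (l : List α) : pairsL l ⊆ pairsL (x :: l) := by
  cases l with
  | nil => simp [pairsL]
  | cons b t => rw [pairsL_cons_cons]; exact List.subset_cons_self _ _

lemma rel_of_mem_pairsL {R : α → α → Prop} :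
    ∀ {l : List α}, l.Chain' R → ∀ x ∈ pairsL l, R x.1 x.2
  | [], _, x, hx => by simp [pairsL] at hx
  | [_], _, x, hx => by simp [pairsL] at hx
  | a :: b :: rest, h, x, hx => by
      obtain ⟨hab, h'⟩ := List.isChain_cons_cons.mp h
      rw [pairsL_cons_cons, List.mem_cons] at hx
      rcases hx with rfl | hx
      · exact hab
      · exact rel_of_mem_pairsL h' x hx

lemma map_snd_pairsL : ∀ (l : List α), (pairsL l).map Prod.snd = l.tail
  | [] => rfl
  | [_] => rfl
  | a :: b :: rest => by
      rw [pairsL_cons_cons, List.map_cons, map_snd_pairsL (b :: rest)]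
      rfl

lemma map_fst_pairsL : ∀ (l : List α), (pairsL l).map Prod.fst = l.dropLast
  | [] => rfl
  | [_] => rfl
  | a :: b :: rest => by
      rw [pairsL_cons_cons, List.map_cons, map_fst_pairsL (b :: rest)]
      rfl

lemma nodup_pairsL {l : List α} (h : l.Nodup) : (pairsL l).Nodup :=
  List.Nodup.of_map Prod.fst (by rw [map_fst_pairsL]; exact (List.dropLast_sublist l).nodup h)

lemma sum_ite_pair_snd [Fintype α] [DecidableEq α] (x y w : α) :
    (∑ a : α, if (@BEq.beq _ instBEqOfDecidableEq (x, y) (a, w)) = true then 1 else 0)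
      = if (y == w) = true then 1 else 0 := by
  simp only [beq_iff_eq, Prod.mk.injEq]
  by_cases hy : y = w
  · subst hy; simp
  · simp [hy]

lemma sum_ite_pair_fst [Fintype α] [DecidableEq α] (x y w : α) :
    (∑ b : α, if (@BEq.beq _ instBEqOfDecidableEq (x, y) (w, b)) = true then 1 else 0)
      = if (x == w) = true then 1 else 0 := by
  simp only [beq_iff_eq, Prod.mk.injEq]
  by_cases hx : x = w
  · subst hx; simp
  · simp [hx]

lemma sum_count_snd [Fintype α] [DecidableEq α] :
    ∀ (P : List (α × α)) (w : α), ∑ a, cntD (a, w) P = cntD w (P.map Prod.snd)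
  | [], w => by simp [cntD]
  | (x, y) :: P, w => by
      have h := sum_count_snd P w
      simp only [cntD] at h ⊢
      simp only [List.count_cons, List.map_cons, Finset.sum_add_distrib]
      rw [h, sum_ite_pair_snd x y w]

lemma sum_count_fst [Fintype α] [DecidableEq α] :
    ∀ (P : List (α × α)) (w : α), ∑ b, cntD (w, b) P = cntD w (P.map Prod.fst)
  | [], w => by simp [cntD]
  | (x, y) :: P, w => by
      have h := sum_count_fst P w
      simp only [cntD] at h ⊢
      simp only [List.count_cons, List.map_cons, Finset.sum_add_distrib]
      rw [h, sum_ite_pair_fst x y w]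

lemma count_tail [DecidableEq α] (L : List α) (hL : L ≠ []) (w : α) (hw : w ≠ L.head hL) :
    cntD w L.tail = cntD w L := by
  cases L with
  | nil => exact absurd rfl hL
  | cons h T =>
      simp only [List.head_cons] at hw
      simp [cntD, List.count_cons, Ne.symm hw]

lemma count_dropLast [DecidableEq α] (L : List α) (hL : L ≠ []) (w : α)
    (hw : w ≠ L.getLast hL) : cntD w L.dropLast = cntD w L := by
  simp only [cntD]
  conv_rhs => rw [← List.dropLast_append_getLast hL]
  simp [List.count_append, List.count_cons, Ne.symm hw]

lemma chain'_splitL {E : V → V → Prop} :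
    ∀ {l : List V}, l.Chain' E → (splitL l).Chain' (SplitEdge E)
  | [], _ => by exact List.IsChain.nil
  | [a], _ => by
      refine List.isChain_cons_cons.mpr ⟨rfl, ?_⟩
      simp
  | a :: b :: rest, h => by
      obtain ⟨hab, h'⟩ := List.isChain_cons_cons.mp h
      have IH := chain'_splitL h'
      show List.Chain' (SplitEdge E) (Sum.inl a :: Sum.inr a :: splitL (b :: rest))
      refine List.isChain_cons_cons.mpr ⟨rfl, List.isChain_cons.mpr ⟨?_, IH⟩⟩
      intro y hy
      have hh : (splitL (b :: rest)).head? = some (Sum.inl b) := rfl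
      rw [hh, Option.mem_some_iff] at hy
      subst hy
      exact hab

lemma nodup_splitL {l : List V} (h : l.Nodup) : (splitL l).Nodup := by
  rw [splitL, List.nodup_flatMap]
  refine ⟨fun x _ => by simp, h.imp ?_⟩
  intro a b hab
  intro x hxa hxb
  simp only [List.mem_cons, List.not_mem_nil, or_false] at hxa hxb
  rcases hxa with rfl | rfl <;> rcases hxb with h' | h' <;> simp_all

lemma head?_splitL : ∀ (l : List V), (splitL l).head? = l.head?.map Sum.inl
  | [] => rfl
  | _ :: _ => rfl

lemma getLast?_splitL : ∀ (l : List V), (splitL l).getLast? = l.getLast?.map Sum.inr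
  | [] => rfl
  | [a] => rfl
  | a :: b :: rest => by
      have h : splitL (a :: b :: rest) = [Sum.inl a, Sum.inr a] ++ splitL (b :: rest) := rfl
      have hne : splitL (b :: rest) ≠ [] := by simp [splitL]
      rw [h, List.getLast?_append_of_ne_nil _ hne, getLast?_splitL (b :: rest),
        List.getLast?_cons_cons]

lemma mem_pairsL_splitL : ∀ {l : List V} {v : V}, v ∈ l →
    (Sum.inl v, Sum.inr v) ∈ pairsL (splitL l)
  | a :: rest, v, hv => by
      show (Sum.inl v, Sum.inr v) ∈ pairsL (Sum.inl a :: Sum.inr a :: splitL rest)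
      rw [pairsL_cons_cons, List.mem_cons]
      rcases List.mem_cons.mp hv with rfl | hv
      · left; rfl
      · right
        exact pairsL_subset_cons _ _ (mem_pairsL_splitL hv)

lemma nodup_of_chain' {E : V → V → Prop} (hacyc : ∀ v, ¬ Relation.TransGen E v v)
    {l : List V} (h : l.Chain' E) : l.Nodup := by
  haveI : IsTrans V (Relation.TransGen E) := ⟨fun _ _ _ => Relation.TransGen.trans⟩
  have h1 : l.Chain' (Relation.TransGen E) := h.imp fun a b hab => Relation.TransGen.single hab
  have h2 : l.Pairwise (Relation.TransGen E) := List.isChain_iff_pairwise.mp h1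
  exact h2.imp fun hab => by rintro rfl; exact hacyc _ hab

end Aux

/-- Conversely, if a finite DAG (source `s`, sink `t`, `|V| ≥ 3`,
every vertex on some s-t path) has `k` s-t paths collectively visiting every
vertex, with `k ≤ |V| - 2`, then the vertex-split network admits a feasible
integer flow of value `k`. -/
theorem covering_paths_give_feasible_flow {V : Type*} [Fintype V] [DecidableEq V]
    (E : V → V → Prop) (s t : V) (hst : s ≠ t)
    (hcard : 3 ≤ Fintype.card V)
    (hacyc : ∀ v, ¬ Relation.TransGen E v v)
    (hs : ∀ u, ¬ E u s) (ht : ∀ u, ¬ E t u)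
    (hall : ∀ v : V, ∃ p : List V, IsSTWalk E s t p ∧ v ∈ p)
    (k : ℕ) (hk : k ≤ Fintype.card V - 2)
    (p : Fin k → List V)
    (hpaths : ∀ i, IsSTWalk E s t (p i))
    (hcover : ∀ v : V, ∃ i, v ∈ p i) :
    ∃ f : V ⊕ V → V ⊕ V → ℕ,
      FeasibleSplitFlow E s t f ∧ SplitFlowValue s f = k := by
  classical
  set L : Fin k → List (V ⊕ V) := fun i => splitL (p i) with hLdef
  set P : Fin k → List ((V ⊕ V) × (V ⊕ V)) := fun i => pairsL (L i) with hPdef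
  have hne : ∀ i, p i ≠ [] := fun i => ((hpaths i).1).1
  have hch : ∀ i, (p i).Chain' E := fun i => ((hpaths i).1).2
  have hLne : ∀ i, L i ≠ [] := by
    intro i
    have := hne i
    cases hp : p i with
    | nil => exact absurd hp this
    | cons a r => simp [hLdef, splitL, hp]
  have hLch : ∀ i, (L i).Chain' (SplitEdge E) := fun i => chain'_splitL (hch i)
  have hLnd : ∀ i, (L i).Nodup := fun i => nodup_splitL (nodup_of_chain' hacyc (hch i))
  have hPnd : ∀ i, (P i).Nodup := fun i => nodup_pairsL (hLnd i)
  have hLhd : ∀ i, (L i).head? = some (Sum.inl s) := by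
    intro i
    rw [hLdef]
    simp only
    rw [head?_splitL, (hpaths i).2.1]
    rfl
  have hLlast : ∀ i, (L i).getLast? = some (Sum.inr t) := by
    intro i
    rw [hLdef]
    simp only
    rw [getLast?_splitL, (hpaths i).2.2]
    rfl
  have hLhead : ∀ i, (L i).head (hLne i) = Sum.inl s := by
    intro i
    have := hLhd i
    rw [List.head?_eq_head (hLne i), Option.some_inj] at this
    exact this
  have hLgetLast : ∀ i, (L i).getLast (hLne i) = Sum.inr t := by
    intro i
    have := hLlast i
    rw [List.getLast?_eq_getLast (hLne i), Option.some_inj] at this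
    exact this
  refine ⟨fun a b => ∑ i, cntD (a, b) (P i), ⟨?_, ?_, ?_, ?_⟩, ?_⟩
  · -- support
    intro a b hab
    refine Finset.sum_eq_zero fun i _ => cntD_eq_zero.mpr fun hmem => ?_
    exact hab (rel_of_mem_pairsL (hLch i) _ hmem)
  · -- lower bounds
    intro a b
    match a, b with
    | Sum.inl v, Sum.inr w =>
        show (if v = w ∧ v ≠ s ∧ v ≠ t then 1 else 0) ≤ _
        split_ifs with hvw
        · obtain ⟨rfl, -, -⟩ := hvw
          obtain ⟨i, hi⟩ := hcover v
          have hmem : (Sum.inl v, Sum.inr v) ∈ P i := mem_pairsL_splitL hi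
          have h1 : 1 ≤ cntD (Sum.inl v, Sum.inr v) (P i) := cntD_pos.mpr hmem
          calc 1 ≤ cntD (Sum.inl v, Sum.inr v) (P i) := h1
            _ ≤ _ := Finset.single_le_sum (f := fun j => cntD (Sum.inl v, Sum.inr v) (P j))
                (fun _ _ => Nat.zero_le _) (Finset.mem_univ i)
        · exact Nat.zero_le _
    | Sum.inl v, Sum.inl w => exact Nat.zero_le _
    | Sum.inr v, Sum.inl w => exact Nat.zero_le _
    | Sum.inr v, Sum.inr w => exact Nat.zero_le _
  · -- capacity
    intro a b _
    calc ∑ i, cntD (a, b) (P i) ≤ ∑ _i : Fin k, 1 :=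
          Finset.sum_le_sum fun i _ => cntD_le_one (hPnd i) _
      _ = k := by simp
      _ ≤ Fintype.card V - 2 := hk
  · -- conservation
    intro w hws hwt
    have h1 : (∑ a, ∑ i, cntD (a, w) (P i)) = ∑ i, cntD w (L i) := by
      rw [Finset.sum_comm]
      refine Finset.sum_congr rfl fun i _ => ?_
      rw [sum_count_snd, map_snd_pairsL]
      exact count_tail (L i) (hLne i) w (by rw [hLhead i]; exact hws)
    have h2 : (∑ b, ∑ i, cntD (w, b) (P i)) = ∑ i, cntD w (L i) := by
      rw [Finset.sum_comm]
      refine Finset.sum_congr rfl fun i _ => ?_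
      rw [sum_count_fst, map_fst_pairsL]
      exact count_dropLast (L i) (hLne i) w (by rw [hLgetLast i]; exact hwt)
    exact h1.trans h2.symm
  · -- value
    show (∑ b, ∑ i, cntD (Sum.inl s, b) (P i)) = k
    rw [Finset.sum_comm]
    have hone : ∀ i, ∑ b, cntD (Sum.inl s, b) (P i) = 1 := by
      intro i
      rw [sum_count_fst, map_fst_pairsL]
      rw [count_dropLast (L i) (hLne i) _ (by rw [hLgetLast i]; simp)]
      refine cntD_eq_one (hLnd i) ?_
      rw [← hLhead i]
      exact List.head_mem _
    simp [hone]
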